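/- Let Θ be a convex bounded subset of the open positive orthant in R^d. Then the function w ↦ sqrt(inf over θ in Θ of Σ_{i=1}^d w_i²/θ_i) defines a norm on R^d. -/

import Mathlib

noncomputable def thetaNorm {d : ℕ} (Θ : Set (Fin d → ℝ)) (w : Fin d → ℝ) : ℝ :=
  Real.sqrt (⨅ θ : Θ, ∑ i, w i ^ 2 / (θ : Fin d → ℝ) i)

private lemma sqrt_add_le'' (a b : ℝ) (ha : 0 ≤ a) (hb : 0 ≤ b) :
    Real.sqrt (a + b) ≤ Real.sqrt a + Real.sqrt b := by
  have h : a + b ≤ (Real.sqrt a + Real.sqrt b) ^ 2 := by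
    have h1 := Real.sq_sqrt ha
    have h2 := Real.sq_sqrt hb
    nlinarith [Real.sqrt_nonneg a, Real.sqrt_nonneg b]
  calc Real.sqrt (a + b) ≤ Real.sqrt ((Real.sqrt a + Real.sqrt b) ^ 2) :=
        Real.sqrt_le_sqrt h
    _ = Real.sqrt a + Real.sqrt b := Real.sqrt_sq (by positivity)

theorem theta_norm_is_norm {d : ℕ} (Θ : Set (Fin d → ℝ)) (hne : Θ.Nonempty)
    (hconv : Convex ℝ Θ) (hbdd : Bornology.IsBounded Θ)
    (hpos : ∀ θ ∈ Θ, ∀ i, 0 < θ i) :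
    (∀ w, thetaNorm Θ w = 0 ↔ w = 0) ∧
    (∀ (a : ℝ) (w : Fin d → ℝ), thetaNorm Θ (a • w) = |a| * thetaNorm Θ w) ∧
    (∀ v w : Fin d → ℝ, thetaNorm Θ (v + w) ≤ thetaNorm Θ v + thetaNorm Θ w) := by
  haveI : Nonempty Θ := hne.to_subtype
  set Q : (Fin d → ℝ) → Θ → ℝ := fun w θ => ∑ i, w i ^ 2 / (θ : Fin d → ℝ) i with hQ
  have hQnonneg : ∀ w (θ : Θ), 0 ≤ Q w θ := by
    intro w θ
    apply Finset.sum_nonneg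
    intro i _
    have := hpos θ θ.2 i
    positivity
  have hbdd' : ∀ w, BddBelow (Set.range (Q w)) := by
    intro w
    exact ⟨0, by rintro x ⟨θ, rfl⟩; exact hQnonneg w θ⟩
  have hInonneg : ∀ w, 0 ≤ ⨅ θ, Q w θ := fun w => le_ciInf (hQnonneg w)
  have hNorm : ∀ w, thetaNorm Θ w = Real.sqrt (⨅ θ, Q w θ) := fun w => rfl
  -- definiteness
  have def1 : ∀ w, thetaNorm Θ w = 0 ↔ w = 0 := by
    intro w
    constructor
    · intro h
      by_contra hw
      have ⟨j, hj⟩ : ∃ j, w j ≠ 0 := by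
        by_contra hc
        push_neg at hc
        exact hw (funext hc)
      obtain ⟨M, hM⟩ := hbdd.subset_closedBall 0
      have hMpos : 0 < M := by
        obtain ⟨θ0, hθ0⟩ := hne
        have h1 := hpos θ0 hθ0 j
        have h2 := hM hθ0
        simp only [Metric.mem_closedBall, dist_zero_right] at h2
        have h3 : θ0 j ≤ M := le_trans (le_abs_self _)
          (le_trans (norm_le_pi_norm θ0 j) h2)
        linarith
      have hlow : ∀ θ : Θ, w j ^ 2 / M ≤ Q w θ := by
        intro θ
        have hθj : 0 < (θ : Fin d → ℝ) j := hpos θ θ.2 j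
        have hθjM : (θ : Fin d → ℝ) j ≤ M := by
          have h2 := hM θ.2
          simp only [Metric.mem_closedBall, dist_zero_right] at h2
          exact le_trans (le_abs_self _)
            (le_trans (norm_le_pi_norm (θ : Fin d → ℝ) j) h2)
        have h1 : w j ^ 2 / M ≤ w j ^ 2 / (θ : Fin d → ℝ) j :=
          by gcongr
        refine le_trans h1 ?_
        simp only [hQ]
        exact Finset.single_le_sum (f := fun i => w i ^ 2 / (θ : Fin d → ℝ) i)
          (fun i _ => by have := hpos θ θ.2 i; positivity) (Finset.mem_univ j)
      have hle : w j ^ 2 / M ≤ ⨅ θ, Q w θ := le_ciInf hlow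
      have hpos' : 0 < w j ^ 2 / M := by positivity
      have : 0 < thetaNorm Θ w := by
        rw [hNorm]
        exact Real.sqrt_pos.mpr (lt_of_lt_of_le hpos' hle)
      linarith [this, h.le]
    · rintro rfl
      rw [hNorm]
      have : (⨅ θ : Θ, Q 0 θ) = 0 := by
        simp [hQ]
      rw [this, Real.sqrt_zero]
  refine ⟨def1, ?_, ?_⟩
  -- homogeneity
  · intro a w
    have hQa : (fun θ : Θ => Q (a • w) θ) = fun θ : Θ => a ^ 2 * Q w θ := by
      funext θ
      simp only [hQ, Finset.mul_sum]
      congr 1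
      ext i
      simp [mul_pow, mul_div_assoc]
    have key : (⨅ θ : Θ, Q (a • w) θ) = a ^ 2 * ⨅ θ : Θ, Q w θ := by
      rw [show (⨅ θ : Θ, Q (a • w) θ) = ⨅ θ : Θ, a ^ 2 * Q w θ by rw [hQa]]
      rcases eq_or_ne a 0 with rfl | ha
      · simp
      · have ha2 : 0 < a ^ 2 := by positivity
        have hbdd2 : BddBelow (Set.range fun θ : Θ => a ^ 2 * Q w θ) := by
          refine ⟨0, ?_⟩
          rintro x ⟨θ, rfl⟩
          exact mul_nonneg ha2.le (hQnonneg w θ)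
        apply le_antisymm
        · have : (⨅ θ : Θ, a ^ 2 * Q w θ) / a ^ 2 ≤ ⨅ θ : Θ, Q w θ := by
            apply le_ciInf
            intro θ
            rw [div_le_iff₀ ha2, mul_comm]
            exact ciInf_le hbdd2 θ
          linarith [(div_le_iff₀' ha2).mp this]
        · apply le_ciInf
          intro θ
          exact mul_le_mul_of_nonneg_left (ciInf_le (hbdd' w) θ) ha2.le
    rw [hNorm, hNorm, key, Real.sqrt_mul (by positivity), Real.sqrt_sq_eq_abs]
  -- triangle
  · intro v w
    set A := ⨅ θ : Θ, Q v θ with hA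
    set B := ⨅ θ : Θ, Q w θ with hB
    have hA0 := hInonneg v
    have hB0 := hInonneg w
    have key : ∀ ε : ℝ, 0 < ε →
        thetaNorm Θ (v + w) ≤ Real.sqrt (A + ε) + Real.sqrt (B + ε) := by
      intro ε hε
      obtain ⟨θ1, hθ1⟩ : ∃ θ1 : Θ, Q v θ1 < A + ε := exists_lt_of_ciInf_lt (by linarith)
      obtain ⟨θ2, hθ2⟩ : ∃ θ2 : Θ, Q w θ2 < B + ε := exists_lt_of_ciInf_lt (by linarith)
      set a := Real.sqrt (A + ε) with ha
      set b := Real.sqrt (B + ε) with hb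
      have haA : a ^ 2 = A + ε := Real.sq_sqrt (by linarith)
      have hbB : b ^ 2 = B + ε := Real.sq_sqrt (by linarith)
      have hapos : 0 < a := Real.sqrt_pos.mpr (by linarith)
      have hbpos : 0 < b := Real.sqrt_pos.mpr (by linarith)
      set lam := a / (a + b) with hlam
      have hab : 0 < a + b := by linarith
      have hlam0 : 0 < lam := by positivity
      have hlam1 : lam < 1 := by
        rw [hlam, div_lt_one hab]; linarith
      have h1lam : 1 - lam = b / (a + b) := by
        field_simp [hlam]
        rw [hlam, sub_mul, div_mul_cancel₀ _ hab.ne']; ring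
      have h1lam0 : 0 < 1 - lam := by linarith
      set θ : Fin d → ℝ := lam • (θ1 : Fin d → ℝ) + (1 - lam) • (θ2 : Fin d → ℝ) with hθ
      have hθΘ : θ ∈ Θ := hconv θ1.2 θ2.2 hlam0.le (by linarith) (by ring)
      have hkey : Q (v + w) ⟨θ, hθΘ⟩ ≤ Q v θ1 / lam + Q w θ2 / (1 - lam) := by
        simp only [hQ, Pi.add_apply]
        rw [Finset.sum_div, Finset.sum_div, ← Finset.sum_add_distrib]
        apply Finset.sum_le_sum
        intro i _
        have hp : 0 < lam * (θ1 : Fin d → ℝ) i := mul_pos hlam0 (hpos _ θ1.2 i)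
        have hq : 0 < (1 - lam) * (θ2 : Fin d → ℝ) i :=
          mul_pos h1lam0 (hpos _ θ2.2 i)
        have hsum : θ i = lam * (θ1 : Fin d → ℝ) i + (1 - lam) * (θ2 : Fin d → ℝ) i := by
          simp [hθ]
        have h2 : v i ^ 2 / (θ1 : Fin d → ℝ) i / lam = v i ^ 2 / (lam * (θ1 : Fin d → ℝ) i) := by
          rw [div_div, mul_comm]
        have h3 : w i ^ 2 / (θ2 : Fin d → ℝ) i / (1 - lam)
            = w i ^ 2 / ((1 - lam) * (θ2 : Fin d → ℝ) i) := by
          rw [div_div, mul_comm]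
        rw [hsum, h2, h3, div_add_div _ _ (ne_of_gt hp) (ne_of_gt hq),
          div_le_div_iff₀ (by positivity) (by positivity)]
        nlinarith [sq_nonneg (v i * ((1 - lam) * (θ2 : Fin d → ℝ) i)
          - w i * (lam * (θ1 : Fin d → ℝ) i)), hp.le, hq.le, sq_nonneg (v i), sq_nonneg (w i)]
      have hbound : Q v θ1 / lam + Q w θ2 / (1 - lam) ≤ (a + b) ^ 2 := by
        have hsumeq : (A + ε) / lam + (B + ε) / (1 - lam) = (a + b) ^ 2 := by
          rw [← haA, ← hbB, h1lam, hlam]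
          field_simp
        have e1 : Q v θ1 / lam ≤ (A + ε) / lam := (div_le_div_iff_of_pos_right hlam0).mpr hθ1.le
        have e2 : Q w θ2 / (1 - lam) ≤ (B + ε) / (1 - lam) :=
          (div_le_div_iff_of_pos_right h1lam0).mpr hθ2.le
        linarith
      have hc : (⨅ θ' : Θ, Q (v + w) θ') ≤ (a + b) ^ 2 :=
        le_trans (ciInf_le (hbdd' (v + w)) ⟨θ, hθΘ⟩) (le_trans hkey hbound)
      rw [hNorm]
      calc Real.sqrt (⨅ θ' : Θ, Q (v + w) θ') ≤ Real.sqrt ((a + b) ^ 2) :=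
            Real.sqrt_le_sqrt hc
        _ = a + b := Real.sqrt_sq hab.le
    -- conclude
    rw [hNorm v, hNorm w, ← hA, ← hB]
    refine le_of_forall_pos_le_add fun δ hδ => ?_
    have hε : (0:ℝ) < (δ / 2) ^ 2 := by positivity
    have h1 := key _ hε
    have h2 : Real.sqrt (A + (δ / 2) ^ 2) ≤ Real.sqrt A + δ / 2 := by
      calc Real.sqrt (A + (δ / 2) ^ 2) ≤ Real.sqrt A + Real.sqrt ((δ / 2) ^ 2) :=
            sqrt_add_le'' _ _ hA0 hε.le
        _ = Real.sqrt A + δ / 2 := by rw [Real.sqrt_sq (by linarith)]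
    have h3 : Real.sqrt (B + (δ / 2) ^ 2) ≤ Real.sqrt B + δ / 2 := by
      calc Real.sqrt (B + (δ / 2) ^ 2) ≤ Real.sqrt B + Real.sqrt ((δ / 2) ^ 2) :=
            sqrt_add_le'' _ _ hB0 hε.le
        _ = Real.sqrt B + δ / 2 := by rw [Real.sqrt_sq (by linarith)]
    linarith
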